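/- Let M be a symmetric irreducible r×r 0–1 transition matrix and let A : Σ̂_M → ℝ be Lipschitz continuous. Suppose β_n → ∞ and β̄_n → ∞ are sequences with φ_{β_n}/β_n → V and φ_{β̄_n}/β̄_n → V̄ uniformly, where φ_β denotes the forward effective potential for βA. Then for every point y ∈ Σ*_M, max_{μ ∈ M_σ} ∫_{Σ_M} ( A(y,x) + V(x) − V(y) ) dμ(x) = max_{μ ∈ M_σ} ∫_{Σ_M} ( A(y,x) + V̄(x) − V̄(y) ) dμ(x). -/

import Mathlib

open MeasureTheory Filter Topology Real

/-- The one-sided subshift of finite type defined by the 0-1 transition matrix `M`: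
sequences `x : ℕ → Fin r` with `M (x j) (x (j+1)) = 1` for all `j`. -/
abbrev Shift (r : ℕ) (M : Fin r → Fin r → Bool) : Type :=
  {x : ℕ → Fin r // ∀ j : ℕ, M (x j) (x (j + 1)) = true}

variable {r : ℕ} {M : Fin r → Fin r → Bool}

/-- The matrix `M` is irreducible: any symbol can be joined to any other by an
admissible path of positive length. -/
def Irred (M : Fin r → Fin r → Bool) : Prop :=
  ∀ i j : Fin r, ∃ n : ℕ, ∃ w : Fin (n + 2) → Fin r,
    w 0 = i ∧ w (Fin.last (n + 1)) = j ∧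
    ∀ k : Fin (n + 1), M (w k.castSucc) (w k.succ) = true

/-- The left shift map on the subshift. -/
def shiftMap (x : Shift r M) : Shift r M :=
  ⟨fun j => x.1 (j + 1), fun j => x.2 (j + 1)⟩

/-- The metric `d(x,y) = Λ^k`, `k = min { j : x_j ≠ y_j }`, `d(x,x) = 0`. -/
noncomputable def shiftDist (Λ : ℝ) (x y : Shift r M) : ℝ :=
  letI := Classical.decEq (Shift r M)
  if h : x = y then 0
  else Λ ^ Nat.find (show ∃ j : ℕ, x.1 j ≠ y.1 j by
    by_contra hc
    push_neg at hc
    exact h (Subtype.ext (funext hc)))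

/-- `φ` is Lipschitz with constant `K` for the metric `shiftDist Λ`. -/
def LipBnd (Λ K : ℝ) (φ : Shift r M → ℝ) : Prop :=
  ∀ x y : Shift r M, |φ x - φ y| ≤ K * shiftDist Λ x y

/-- `φ` is Lipschitz continuous for the metric `shiftDist Λ`. -/
def IsLip (Λ : ℝ) (φ : Shift r M → ℝ) : Prop :=
  ∃ K : ℝ, LipBnd Λ K φ

/-- The best Lipschitz constant of `φ`. -/
noncomputable def lipC (Λ : ℝ) (φ : Shift r M → ℝ) : ℝ :=
  sInf {K : ℝ | 0 ≤ K ∧ LipBnd Λ K φ}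

/-- The uniform norm `‖φ‖₀`. -/
noncomputable def unorm (φ : Shift r M → ℝ) : ℝ :=
  ⨆ x : Shift r M, |φ x|

/-- An observable on the natural extension `Σ̂_M ⊂ Σ*_M × Σ_M` (with `Σ*_M`
canonically identified with `Σ_M`), as a function of `(y, x)`; it is Lipschitz with
constant `K` for the max-metric. -/
def LipBnd2 (Λ K : ℝ) (A : Shift r M → Shift r M → ℝ) : Prop :=
  ∀ y x y' x' : Shift r M,
    |A y x - A y' x'| ≤ K * max (shiftDist Λ y y') (shiftDist Λ x x')

/-- `A` is Lipschitz continuous on `Σ̂_M`. -/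
def IsLip2 (Λ : ℝ) (A : Shift r M → Shift r M → ℝ) : Prop :=
  ∃ K : ℝ, LipBnd2 Λ K A

/-- The best Lipschitz constant of the observable `A`. -/
noncomputable def lipC2 (Λ : ℝ) (A : Shift r M → Shift r M → ℝ) : ℝ :=
  sInf {K : ℝ | 0 ≤ K ∧ LipBnd2 Λ K A}

/-- The uniform norm `‖A‖₀` of the observable. -/
noncomputable def unorm2 (A : Shift r M → Shift r M → ℝ) : ℝ :=
  ⨆ p : Shift r M × Shift r M, |A p.1 p.2|

/-- `μ` is a `σ`-invariant Borel probability measure on the subshift. -/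
def InvProb (μ : Measure (Shift r M)) : Prop :=
  IsProbabilityMeasure μ ∧ μ.map shiftMap = μ

/-- Entropy of the cylinder partition of length `n`:
`H_n(μ) = - ∑_{|w| = n} μ([w]) log μ([w])`. -/
noncomputable def cylEnt (μ : Measure (Shift r M)) (n : ℕ) : ℝ :=
  ∑ w : Fin n → Fin r,
    Real.negMulLog ((μ {x : Shift r M | ∀ i : Fin n, x.1 i.1 = w i}).toReal)

/-- The Kolmogorov–Sinai entropy `h_μ(σ)` of an invariant measure on the subshift:
since the cylinder partition is generating and `n ↦ H_n(μ)` is subadditive,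
`h_μ(σ) = lim_n H_n(μ)/n = inf_n H_n(μ)/n`. -/
noncomputable def entropy (μ : Measure (Shift r M)) : ℝ :=
  ⨅ n : ℕ, cylEnt μ (n + 1) / (n + 1)

/-- The operator
`G⁺_A(φ)(y) = sup_{μ ∈ M_σ} [ ∫ (A(y,x) + φ(x)) dμ(x) + h_μ(σ) ]`. -/
noncomputable def Gplus (A : Shift r M → Shift r M → ℝ)
    (φ : Shift r M → ℝ) (y : Shift r M) : ℝ :=
  sSup {t : ℝ | ∃ μ : Measure (Shift r M), InvProb μ ∧
    t = ∫ x, (A y x + φ x) ∂μ + entropy μ}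

/-- The maximal ergodic average `max_{μ ∈ M_σ} ∫ B dμ`. -/
noncomputable def maxErg (B : Shift r M → ℝ) : ℝ :=
  sSup {t : ℝ | ∃ μ : Measure (Shift r M), InvProb μ ∧ t = ∫ x, B x ∂μ}

/-- The quotient norm on functions modulo additive constants:
`‖g‖_c = inf_{γ ∈ ℝ} ‖g + γ‖₀`. -/
noncomputable def cnorm (g : Shift r M → ℝ) : ℝ :=
  ⨅ γ : ℝ, unorm (fun x => g x + γ)

/-! ### Auxiliary lemmas -/

section Aux

lemma shiftDist_self {Λ : ℝ} (x : Shift r M) : shiftDist Λ x x = 0 := by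
  simp [shiftDist]

lemma shiftDist_nonneg {Λ : ℝ} (hΛ : 0 ≤ Λ) (x y : Shift r M) : 0 ≤ shiftDist Λ x y := by
  unfold shiftDist
  split
  · exact le_refl 0
  · exact pow_nonneg hΛ _

lemma shiftDist_le_pow {Λ : ℝ} (hΛ0 : 0 ≤ Λ) (hΛ1 : Λ ≤ 1) {x y : Shift r M} {k : ℕ}
    (h : ∀ j < k, x.1 j = y.1 j) : shiftDist Λ x y ≤ Λ ^ k := by
  unfold shiftDist
  split
  · exact pow_nonneg hΛ0 _
  · next hne =>
    apply pow_le_pow_of_le_one hΛ0 hΛ1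
    rw [Nat.le_find_iff]
    intro m hm hmne
    exact hmne (h m hm)

lemma shiftDist_le_one {Λ : ℝ} (hΛ0 : 0 ≤ Λ) (hΛ1 : Λ ≤ 1) (x y : Shift r M) :
    shiftDist Λ x y ≤ 1 := by
  have := shiftDist_le_pow (x := x) (y := y) (k := 0) hΛ0 hΛ1 (by omega)
  simpa using this

lemma measurableSet_cyl (k : ℕ) (w : Fin k → Fin r) :
    MeasurableSet {y : Shift r M | ∀ j : Fin k, y.1 j.1 = w j} := by
  have : {y : Shift r M | ∀ j : Fin k, y.1 j.1 = w j}
      = ⋂ j : Fin k, (fun y : Shift r M => y.1 j.1) ⁻¹' {w j} := by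
    ext y; simp [Set.mem_iInter]
  rw [this]
  exact MeasurableSet.iInter fun j =>
    ((measurable_pi_apply (j.1)).comp measurable_subtype_coe) (measurableSet_singleton _)

lemma measurable_of_lipBnd {Λ K : ℝ} (hΛ : Λ ∈ Set.Ioo (0 : ℝ) 1) {φ : Shift r M → ℝ}
    (hφ : LipBnd Λ K φ) : Measurable φ := by
  set K' := max K 0 with hK'
  have hK'0 : 0 ≤ K' := le_max_right _ _
  have hbd : ∀ (x y : Shift r M) (k : ℕ), (∀ j < k, x.1 j = y.1 j) →
      |φ x - φ y| ≤ K' * Λ ^ k := by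
    intro x y k h
    have h1 := hφ x y
    have h2 : K * shiftDist Λ x y ≤ K' * shiftDist Λ x y :=
      mul_le_mul_of_nonneg_right (le_max_left _ _) (shiftDist_nonneg hΛ.1.le x y)
    have h3 : K' * shiftDist Λ x y ≤ K' * Λ ^ k :=
      mul_le_mul_of_nonneg_left (shiftDist_le_pow hΛ.1.le hΛ.2.le h) hK'0
    linarith
  apply measurable_of_Iio
  intro a
  have hset : φ ⁻¹' Set.Iio a = ⋃ k : ℕ, ⋃ w : Fin k → Fin r,
      ⋃ (_ : ∃ x : Shift r M, (∀ j : Fin k, x.1 j.1 = w j) ∧ φ x + K' * Λ ^ k < a),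
      {y : Shift r M | ∀ j : Fin k, y.1 j.1 = w j} := by
    ext y
    simp only [Set.mem_preimage, Set.mem_Iio, Set.mem_iUnion, Set.mem_setOf_eq]
    constructor
    · intro hy
      have htend : Tendsto (fun k : ℕ => K' * Λ ^ k) atTop (𝓝 (K' * 0)) :=
        (tendsto_pow_atTop_nhds_zero_of_lt_one hΛ.1.le hΛ.2).const_mul K'
      rw [mul_zero] at htend
      obtain ⟨k, hk⟩ := (htend.eventually_lt_const (show (0:ℝ) < a - φ y by linarith)).exists
      exact ⟨k, fun j => y.1 j.1, ⟨y, fun j => rfl, by linarith⟩, fun j => rfl⟩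
    · rintro ⟨k, w, ⟨x, hxw, hxa⟩, hyw⟩
      have hagree : ∀ j < k, y.1 j = x.1 j := fun j hj =>
        (hyw ⟨j, hj⟩).trans (hxw ⟨j, hj⟩).symm
      have := hbd y x k hagree
      have := abs_le.1 this
      linarith [this.2]
  rw [hset]
  exact MeasurableSet.iUnion fun k => MeasurableSet.iUnion fun w =>
    MeasurableSet.iUnion fun _ => measurableSet_cyl k w

lemma abs_le_of_lipBnd {Λ K : ℝ} (hΛ : Λ ∈ Set.Ioo (0 : ℝ) 1) {φ : Shift r M → ℝ}
    (hφ : LipBnd Λ K φ) (x₀ x : Shift r M) : |φ x| ≤ |φ x₀| + max K 0 := by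
  have h1 := hφ x x₀
  have hd0 := shiftDist_nonneg hΛ.1.le x x₀
  have hd1 := shiftDist_le_one hΛ.1.le hΛ.2.le x x₀
  have h2 : K * shiftDist Λ x x₀ ≤ max K 0 * shiftDist Λ x x₀ :=
    mul_le_mul_of_nonneg_right (le_max_left _ _) hd0
  have h3 : max K 0 * shiftDist Λ x x₀ ≤ max K 0 * 1 :=
    mul_le_mul_of_nonneg_left hd1 (le_max_right _ _)
  have := abs_sub_abs_le_abs_sub (φ x) (φ x₀)
  linarith

lemma lipBnd_snd {Λ K : ℝ} (hΛ0 : 0 ≤ Λ) {A : Shift r M → Shift r M → ℝ}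
    (hA : LipBnd2 Λ K A) (y : Shift r M) : LipBnd Λ K (fun x => A y x) := by
  intro x x'
  have := hA y x y x'
  rwa [shiftDist_self, max_eq_right (shiftDist_nonneg hΛ0 x x')] at this

lemma abs_le_of_lipBnd2 {Λ K : ℝ} (hΛ : Λ ∈ Set.Ioo (0 : ℝ) 1)
    {A : Shift r M → Shift r M → ℝ} (hA : LipBnd2 Λ K A) (y₀ x₀ y x : Shift r M) :
    |A y x| ≤ |A y₀ x₀| + max K 0 := by
  have h1 := hA y x y₀ x₀
  have hd0 : 0 ≤ max (shiftDist Λ y y₀) (shiftDist Λ x x₀) :=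
    le_trans (shiftDist_nonneg hΛ.1.le y y₀) (le_max_left _ _)
  have hd1 : max (shiftDist Λ y y₀) (shiftDist Λ x x₀) ≤ 1 :=
    max_le (shiftDist_le_one hΛ.1.le hΛ.2.le _ _) (shiftDist_le_one hΛ.1.le hΛ.2.le _ _)
  have h2 : K * max (shiftDist Λ y y₀) (shiftDist Λ x x₀)
      ≤ max K 0 * max (shiftDist Λ y y₀) (shiftDist Λ x x₀) :=
    mul_le_mul_of_nonneg_right (le_max_left _ _) hd0
  have h3 : max K 0 * max (shiftDist Λ y y₀) (shiftDist Λ x x₀) ≤ max K 0 * 1 :=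
    mul_le_mul_of_nonneg_left hd1 (le_max_right _ _)
  have := abs_sub_abs_le_abs_sub (A y x) (A y₀ x₀)
  linarith

section Aux2
open scoped ENNReal

lemma negMulLog_le_one' {t : ℝ} (h0 : 0 ≤ t) : Real.negMulLog t ≤ 1 := by
  rcases eq_or_lt_of_le h0 with h | h
  · simp [← h]
  · have hinv : 0 < t⁻¹ := inv_pos.2 h
    have hlog := Real.log_le_sub_one_of_pos hinv
    rw [Real.log_inv] at hlog
    have h2 : t * (-Real.log t) ≤ t * (t⁻¹ - 1) :=
      mul_le_mul_of_nonneg_left hlog h0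
    have h3 : t * t⁻¹ = 1 := mul_inv_cancel₀ h.ne'
    rw [Real.negMulLog]
    nlinarith

lemma prob_toReal_le_one {μ : Measure (Shift r M)} (hμ : IsProbabilityMeasure μ)
    (s : Set (Shift r M)) : (μ s).toReal ≤ 1 := by
  have h1 : μ s ≤ 1 := prob_le_one
  calc (μ s).toReal ≤ (1 : ℝ≥0∞).toReal := ENNReal.toReal_mono ENNReal.one_ne_top h1
    _ = 1 := by simp

lemma cylEnt_nonneg {μ : Measure (Shift r M)} (hμ : IsProbabilityMeasure μ) (n : ℕ) :
    0 ≤ cylEnt μ n :=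
  Finset.sum_nonneg fun w _ =>
    Real.negMulLog_nonneg ENNReal.toReal_nonneg (prob_toReal_le_one hμ _)

lemma entropy_nonneg {μ : Measure (Shift r M)} (hμ : IsProbabilityMeasure μ) :
    0 ≤ entropy μ :=
  Real.iInf_nonneg fun n => div_nonneg (cylEnt_nonneg hμ _) (by positivity)

lemma entropy_le_card {μ : Measure (Shift r M)} (hμ : IsProbabilityMeasure μ) :
    entropy μ ≤ (r : ℝ) := by
  have hb : BddBelow (Set.range fun n : ℕ => cylEnt μ (n + 1) / (n + 1)) := by
    refine ⟨0, ?_⟩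
    rintro _ ⟨n, rfl⟩
    exact div_nonneg (cylEnt_nonneg hμ _) (by positivity)
  have h0 : entropy μ ≤ cylEnt μ (0 + 1) / ((0 : ℕ) + 1) := ciInf_le hb 0
  have h1 : cylEnt μ 1 ≤ (r : ℝ) := by
    calc cylEnt μ 1 ≤ ∑ _w : Fin 1 → Fin r, (1 : ℝ) :=
          Finset.sum_le_sum fun w _ => negMulLog_le_one' ENNReal.toReal_nonneg
      _ = (Fintype.card (Fin 1 → Fin r) : ℝ) := by
          rw [Finset.sum_const, Finset.card_univ, nsmul_eq_mul, mul_one]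
      _ = (r : ℝ) := by simp
  calc entropy μ ≤ cylEnt μ (0 + 1) / ((0 : ℕ) + 1) := h0
    _ = cylEnt μ 1 := by norm_num
    _ ≤ (r : ℝ) := h1

lemma integrable_of_bdd {μ : Measure (Shift r M)} (hμ : IsProbabilityMeasure μ)
    {f : Shift r M → ℝ} (hm : Measurable f) {C : ℝ} (hC : ∀ x, |f x| ≤ C) :
    Integrable f μ :=
  (integrable_const C).mono' hm.aestronglyMeasurable
    (ae_of_all _ (by simpa [Real.norm_eq_abs] using hC))

lemma measurable_shiftMap : Measurable (shiftMap : Shift r M → Shift r M) := by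
  have h : Measurable fun x : Shift r M => (fun j => x.1 (j + 1) : ℕ → Fin r) :=
    measurable_pi_lambda _ fun j => (measurable_pi_apply (j + 1)).comp measurable_subtype_coe
  exact h.subtype_mk

lemma shift_iterate_apply (x : Shift r M) (k : ℕ) (j : ℕ) :
    (shiftMap^[k] x).1 j = x.1 (j + k) := by
  induction k generalizing x with
  | zero => simp
  | succ k ih =>
    rw [Function.iterate_succ_apply, ih (shiftMap x)]
    have h : j + (k + 1) = (j + k) + 1 := by omega
    rw [h]
    rfl

lemma exists_shift_point (hr : 2 ≤ r) (hIrr : Irred M) :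
    ∃ (p : ℕ) (x : Shift r M), 0 < p ∧ ∀ j, x.1 (j + p) = x.1 j := by
  obtain ⟨n, w, hw0, hwl, hstep⟩ := hIrr ⟨0, by omega⟩ ⟨0, by omega⟩
  have hp : 0 < n + 1 := Nat.succ_pos n
  have hmod : ∀ j : ℕ, j % (n + 1) < n + 2 := fun j => lt_of_lt_of_le (Nat.mod_lt _ hp) (by omega)
  have hwcongr : ∀ (a b : ℕ) (ha : a < n + 2) (hb : b < n + 2), a = b →
      w ⟨a, ha⟩ = w ⟨b, hb⟩ := by
    intro a b ha hb h; subst h; rfl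
  have main : ∀ (a b : ℕ) (ha : a < n + 2) (hb : b < n + 2),
      (b = a + 1 ∧ a < n + 1) ∨ (a = n ∧ b = 0) → M (w ⟨a, ha⟩) (w ⟨b, hb⟩) = true := by
    rintro a b ha hb (⟨rfl, hlt⟩ | ⟨rfl, rfl⟩)
    · have hs := hstep ⟨a, hlt⟩
      simp only [Fin.castSucc_mk, Fin.succ_mk] at hs
      exact hs
    · have hs := hstep ⟨a, by omega⟩
      simp only [Fin.castSucc_mk, Fin.succ_mk] at hs
      have hlast : w ⟨a + 1, by omega⟩ = (⟨0, by omega⟩ : Fin r) := by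
        rw [← hwl]; apply hwcongr; rfl
      have hzero : w ⟨0, hb⟩ = (⟨0, by omega⟩ : Fin r) := by
        rw [← hw0]; apply hwcongr; rfl
      rw [hzero, ← hlast]
      exact hs
  refine ⟨n + 1, ⟨fun j => w ⟨j % (n + 1), hmod j⟩, ?_⟩, hp, ?_⟩
  · intro j
    have hkp : j % (n + 1) < n + 1 := Nat.mod_lt _ hp
    show M (w ⟨j % (n + 1), hmod j⟩) (w ⟨(j + 1) % (n + 1), hmod (j + 1)⟩) = true
    apply main
    by_cases hcase : j % (n + 1) + 1 < n + 1
    · left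
      constructor
      · rw [← Nat.mod_add_mod, Nat.mod_eq_of_lt hcase]
      · omega
    · right
      constructor
      · omega
      · rw [← Nat.mod_add_mod]
        have : j % (n + 1) = n := by omega
        rw [this]
        simp
  · intro j
    show w ⟨(j + (n + 1)) % (n + 1), _⟩ = w ⟨j % (n + 1), _⟩
    exact hwcongr _ _ _ _ (by rw [Nat.add_mod_right])

lemma shift_nonempty (hr : 2 ≤ r) (hIrr : Irred M) : Nonempty (Shift r M) := by
  obtain ⟨p, x, _, _⟩ := exists_shift_point hr hIrr
  exact ⟨x⟩

lemma exists_invProb (hr : 2 ≤ r) (hIrr : Irred M) :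
    ∃ μ : Measure (Shift r M), InvProb μ := by
  obtain ⟨p, x, hp, hper⟩ := exists_shift_point hr hIrr
  have hfix : shiftMap^[p] x = x :=
    Subtype.ext (funext fun j => (shift_iterate_apply x p j).trans (hper j))
  refine ⟨(p : ℝ≥0∞)⁻¹ • ∑ k ∈ Finset.range p, Measure.dirac (shiftMap^[k] x), ?_, ?_⟩
  · constructor
    rw [Measure.smul_apply, Measure.finset_sum_apply]
    have : ∀ k ∈ Finset.range p, Measure.dirac (shiftMap^[k] x) Set.univ = 1 :=
      fun k _ => measure_univ
    rw [Finset.sum_congr rfl this, Finset.sum_const, Finset.card_range, smul_eq_mul,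
      nsmul_eq_mul, mul_one]
    exact ENNReal.inv_mul_cancel (by exact_mod_cast hp.ne') (ENNReal.natCast_ne_top p)
  · rw [Measure.map_smul]
    congr 1
    have hmap : ∀ s : Finset ℕ, (∑ k ∈ s, Measure.dirac (shiftMap^[k] x)).map shiftMap
        = ∑ k ∈ s, Measure.dirac (shiftMap^[k + 1] x) := by
      intro s
      induction s using Finset.induction with
      | empty => simp
      | insert _ _ hni ih =>
        rw [Finset.sum_insert hni, Measure.map_add _ _ measurable_shiftMap, ih,
          Measure.map_dirac' measurable_shiftMap, Finset.sum_insert hni,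
          ]
        congr 1
        rw [Function.iterate_succ_apply']
    rw [hmap]
    obtain ⟨q, rfl⟩ : ∃ q, p = q + 1 := ⟨p - 1, by omega⟩
    rw [Finset.sum_range_succ, Finset.sum_range_succ']
    congr 1
    rw [hfix]
    simp

end Aux2

section Main
open scoped ENNReal

lemma abs_integral_le {μ : Measure (Shift r M)} (hμ : InvProb μ) {B : Shift r M → ℝ} {C : ℝ}
    (hB : ∀ x, |B x| ≤ C) : |∫ x, B x ∂μ| ≤ C := by
  haveI := hμ.1
  have h := norm_integral_le_of_norm_le_const (μ := μ) (f := B) (C := C)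
    (Filter.Eventually.of_forall fun x => by simpa [Real.norm_eq_abs] using hB x)
  simpa [Real.norm_eq_abs, measure_univ] using h

lemma integral_add_sub_const {μ : Measure (Shift r M)} (hμ : InvProb μ)
    {f g : Shift r M → ℝ} (hf : Integrable f μ) (hg : Integrable g μ) (c : ℝ) :
    ∫ x, (f x + g x - c) ∂μ = ∫ x, f x ∂μ + ∫ x, g x ∂μ - c := by
  haveI := hμ.1
  have h1 : ∫ x, (f x + g x - c) ∂μ = ∫ x, (f x + g x) ∂μ - ∫ _x, c ∂μ :=
    integral_sub (hf.add hg) (integrable_const c)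
  rw [h1, integral_add hf hg, integral_const, probReal_univ, smul_eq_mul,
    one_mul]

lemma unif_lim_measurable {Λ : ℝ} (hΛ : Λ ∈ Set.Ioo (0 : ℝ) 1)
    {φ : ℝ → Shift r M → ℝ} (hφ : ∀ β > (0 : ℝ), IsLip Λ (φ β))
    {b : ℕ → ℝ} (hb : ∀ n, 0 < b n)
    {V : Shift r M → ℝ} (hV : TendstoUniformly (fun n x => φ (b n) x / b n) V atTop) :
    Measurable V := by
  apply measurable_of_tendsto_metrizable (f := fun n x => φ (b n) x / b n)
  · intro n
    obtain ⟨K, hK⟩ := hφ (b n) (hb n)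
    exact (measurable_of_lipBnd hΛ hK).div_const _
  · exact tendsto_pi_nhds.2 fun x => hV.tendsto_at x

lemma unif_lim_bounded {Λ : ℝ} (hΛ : Λ ∈ Set.Ioo (0 : ℝ) 1) (z₀ : Shift r M)
    {φ : ℝ → Shift r M → ℝ} (hφ : ∀ β > (0 : ℝ), IsLip Λ (φ β))
    {b : ℕ → ℝ} (hb : ∀ n, 0 < b n)
    {V : Shift r M → ℝ} (hV : TendstoUniformly (fun n x => φ (b n) x / b n) V atTop) :
    ∃ CV : ℝ, ∀ x, |V x| ≤ CV := by
  have h1 : ∀ᶠ n in atTop, ∀ x, dist (V x) (φ (b n) x / b n) < 1 :=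
    (Metric.tendstoUniformly_iff.1 hV) 1 one_pos
  obtain ⟨N, hN⟩ := h1.exists
  obtain ⟨K, hK⟩ := hφ (b N) (hb N)
  refine ⟨(|φ (b N) z₀| + max K 0) / b N + 1, fun x => ?_⟩
  have h2 := abs_le_of_lipBnd hΛ hK z₀ x
  have h3 := hN x
  rw [Real.dist_eq] at h3
  have h4 : |φ (b N) x / b N| ≤ (|φ (b N) z₀| + max K 0) / b N := by
    rw [abs_div, abs_of_pos (hb N)]
    gcongr
    exact (hb N).le
  have h5 := abs_add_le (V x - φ (b N) x / b N) (φ (b N) x / b N)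
  simp only [sub_add_cancel] at h5
  linarith

lemma tendsto_lam_div (hr : 2 ≤ r) (hIrr : Irred M) {Λ : ℝ} (hΛ : Λ ∈ Set.Ioo (0 : ℝ) 1)
    {A : Shift r M → Shift r M → ℝ} (hA : IsLip2 Λ A)
    {φ : ℝ → Shift r M → ℝ} {lam : ℝ → ℝ}
    (heff : ∀ β > (0 : ℝ), IsLip Λ (φ β) ∧
      ∀ y, Gplus (fun y x => β * A y x) (φ β) y = φ β y + lam β)
    {b : ℕ → ℝ} (hb : ∀ n, 0 < b n) (hbtop : Tendsto b atTop atTop)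
    {V : Shift r M → ℝ} (hV : TendstoUniformly (fun n x => φ (b n) x / b n) V atTop)
    (y : Shift r M) :
    Tendsto (fun n => lam (b n) / b n) atTop
      (𝓝 (sSup {t : ℝ | ∃ μ : Measure (Shift r M), InvProb μ ∧
        t = ∫ x, (A y x + V x - V y) ∂μ})) := by
  obtain ⟨z₀⟩ := shift_nonempty hr hIrr
  obtain ⟨μ₀, hμ₀⟩ := exists_invProb hr hIrr
  obtain ⟨KA, hKA⟩ := hA
  set CA := |A z₀ z₀| + max KA 0 with hCA
  have hAbd : ∀ y x, |A y x| ≤ CA := fun y x => abs_le_of_lipBnd2 hΛ hKA z₀ z₀ y x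
  have hCA0 : 0 ≤ CA := le_trans (abs_nonneg _) (hAbd z₀ z₀)
  have hAm : ∀ y, Measurable (fun x => A y x) := fun y =>
    measurable_of_lipBnd hΛ (lipBnd_snd hΛ.1.le hKA y)
  have hVm : Measurable V := unif_lim_measurable hΛ (fun β hβ => (heff β hβ).1) hb hV
  obtain ⟨CV, hCV⟩ := unif_lim_bounded hΛ z₀ (fun β hβ => (heff β hβ).1) hb hV
  have hCV0 : 0 ≤ CV := le_trans (abs_nonneg _) (hCV z₀)
  set Sset := {t : ℝ | ∃ μ : Measure (Shift r M), InvProb μ ∧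
    t = ∫ x, (A y x + V x - V y) ∂μ} with hSset
  have hBbd : ∀ x, |A y x + V x - V y| ≤ CA + 2 * CV := by
    intro x
    have h1 := hAbd y x
    have h2 := hCV x
    have h3 := hCV y
    have h4 := abs_add_le (A y x + V x) (-(V y))
    have h5 := abs_add_le (A y x) (V x)
    simp only [abs_neg] at h4
    have : A y x + V x - V y = A y x + V x + -(V y) := by ring
    rw [this]
    linarith
  have hSne : Sset.Nonempty := ⟨_, μ₀, hμ₀, rfl⟩
  have hSbdd : BddAbove Sset := by
    refine ⟨CA + 2 * CV, ?_⟩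
    rintro t ⟨μ, hμ, rfl⟩
    exact (abs_le.1 (abs_integral_le hμ hBbd)).2
  have hSsplit : ∀ μ : Measure (Shift r M), InvProb μ →
      ∫ x, (A y x + V x - V y) ∂μ = ∫ x, A y x ∂μ + ∫ x, V x ∂μ - V y := fun μ hμ =>
    integral_add_sub_const hμ (integrable_of_bdd hμ.1 (hAm y) (hAbd y))
      (integrable_of_bdd hμ.1 hVm hCV) _
  rw [Metric.tendsto_atTop]
  intro ε hε
  set ε₁ := ε / 5 with hε₁def
  have hε₁ : 0 < ε₁ := by positivity
  have Ev1 : ∀ᶠ n in atTop, ∀ x, dist (V x) (φ (b n) x / b n) < ε₁ :=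
    (Metric.tendstoUniformly_iff.1 hV) ε₁ hε₁
  have Ev2 : ∀ᶠ n in atTop, (r : ℝ) / ε₁ < b n := hbtop.eventually_gt_atTop _
  obtain ⟨N, hN⟩ := Filter.eventually_atTop.1 (Ev1.and Ev2)
  refine ⟨N, fun n hn => ?_⟩
  obtain ⟨h1n, h2n⟩ := hN n hn
  set β := b n with hβdef
  have hβ : 0 < β := hb n
  have hrβ : (r : ℝ) < β * ε₁ := by
    rw [div_lt_iff₀ hε₁] at h2n
    linarith [h2n]
  obtain ⟨⟨K, hK⟩, heq⟩ := heff β hβ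
  have hφm : Measurable (φ β) := measurable_of_lipBnd hΛ hK
  set Cφ := |φ β z₀| + max K 0 with hCφ
  have hφbd : ∀ x, |φ β x| ≤ Cφ := abs_le_of_lipBnd hΛ hK z₀
  have hGeq : sSup {t : ℝ | ∃ μ : Measure (Shift r M), InvProb μ ∧
      t = ∫ x, (β * A y x + φ β x) ∂μ + entropy μ} = φ β y + lam β := by
    have h := heq y
    simpa only [Gplus] using h
  set Gset := {t : ℝ | ∃ μ : Measure (Shift r M), InvProb μ ∧
    t = ∫ x, (β * A y x + φ β x) ∂μ + entropy μ} with hGset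
  have hGbd : ∀ x, |β * A y x + φ β x| ≤ β * CA + Cφ := by
    intro x
    have h1 := hAbd y x
    have h2 := hφbd x
    have h3 := abs_add_le (β * A y x) (φ β x)
    have h4 : |β * A y x| ≤ β * CA := by
      rw [abs_mul, abs_of_pos hβ]
      exact mul_le_mul_of_nonneg_left h1 hβ.le
    linarith
  have hGne : Gset.Nonempty := ⟨_, μ₀, hμ₀, rfl⟩
  have hGbdd : BddAbove Gset := by
    refine ⟨β * CA + Cφ + r, ?_⟩
    rintro t ⟨μ, hμ, rfl⟩
    have h1 := (abs_le.1 (abs_integral_le hμ hGbd)).2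
    have h2 := entropy_le_card (μ := μ) hμ.1
    linarith
  have hGsplit : ∀ μ : Measure (Shift r M), InvProb μ →
      ∫ x, (β * A y x + φ β x) ∂μ = β * ∫ x, A y x ∂μ + ∫ x, φ β x ∂μ := by
    intro μ hμ
    haveI := hμ.1
    rw [integral_add ((integrable_of_bdd hμ.1 (hAm y) (hAbd y)).const_mul β)
      (integrable_of_bdd hμ.1 hφm hφbd), integral_const_mul]
  -- pointwise comparison of φ β / β with V
  have hptw : ∀ x, |φ β x - β * V x| ≤ β * ε₁ := by
    intro x
    have h3 := h1n x
    rw [Real.dist_eq] at h3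
    have h4 : φ β x - β * V x = -(β * (V x - φ β x / β)) := by
      field_simp
      ring
    rw [h4, abs_neg, abs_mul, abs_of_pos hβ]
    exact mul_le_mul_of_nonneg_left h3.le hβ.le
  have hd1 : ∀ μ : Measure (Shift r M), InvProb μ →
      |∫ x, φ β x ∂μ - β * ∫ x, V x ∂μ| ≤ β * ε₁ := by
    intro μ hμ
    haveI := hμ.1
    have h1 : ∫ x, φ β x ∂μ - β * ∫ x, V x ∂μ = ∫ x, (φ β x - β * V x) ∂μ := by
      rw [integral_sub (integrable_of_bdd hμ.1 hφm hφbd)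
        ((integrable_of_bdd hμ.1 hVm hCV).const_mul β), integral_const_mul]
    rw [h1]
    exact abs_integral_le hμ hptw
  have hd2 : |φ β y - β * V y| ≤ β * ε₁ := hptw y
  -- key inequality (a): every invariant measure gives a lower bound for φ β y + lam β
  have key1 : ∀ μ : Measure (Shift r M), InvProb μ →
      β * ∫ x, A y x ∂μ + ∫ x, φ β x ∂μ + entropy μ ≤ φ β y + lam β := by
    intro μ hμ
    have hmem : (∫ x, (β * A y x + φ β x) ∂μ + entropy μ) ∈ Gset := ⟨μ, hμ, rfl⟩
    have h1 := le_csSup hGbdd hmem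
    rw [hGeq] at h1
    rw [hGsplit μ hμ] at h1
    exact h1
  -- key inequality (b): a near-optimal invariant measure
  have key2 : ∃ μ : Measure (Shift r M), InvProb μ ∧
      φ β y + lam β - β * ε₁ < β * ∫ x, A y x ∂μ + ∫ x, φ β x ∂μ + entropy μ := by
    have hlt : φ β y + lam β - β * ε₁ < sSup Gset := by
      rw [hGeq]
      have : 0 < β * ε₁ := by positivity
      linarith
    obtain ⟨t, ⟨μ, hμ, rfl⟩, hlt'⟩ := exists_lt_of_lt_csSup hGne hlt
    exact ⟨μ, hμ, by rwa [hGsplit μ hμ] at hlt'⟩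
  -- upper estimate : sSup Sset ≤ lam β / β + 2 ε₁
  have hup : sSup Sset ≤ lam β / β + 2 * ε₁ := by
    apply csSup_le hSne
    rintro t ⟨μ, hμ, rfl⟩
    haveI := hμ.1
    rw [hSsplit μ hμ]
    have h1 := key1 μ hμ
    have h3 := abs_le.1 (hd1 μ hμ)
    have h4 := abs_le.1 hd2
    have h5 := entropy_nonneg (μ := μ) hμ.1
    have goal' : β * (∫ x, A y x ∂μ) + β * (∫ x, V x ∂μ) - β * V y
        ≤ lam β + 2 * (β * ε₁) := by linarith [h3.2, h4.1]
    have e1 : β * (∫ x, A y x ∂μ + ∫ x, V x ∂μ - V y)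
        = β * (∫ x, A y x ∂μ) + β * (∫ x, V x ∂μ) - β * V y := by ring
    have e2 : β * (lam β / β + 2 * ε₁) = lam β + 2 * (β * ε₁) := by
      field_simp
    have h6 : β * (∫ x, A y x ∂μ + ∫ x, V x ∂μ - V y) ≤ β * (lam β / β + 2 * ε₁) := by
      rw [e1, e2]
      exact goal'
    exact le_of_mul_le_mul_left h6 hβ
  -- lower estimate : lam β / β ≤ sSup Sset + 4 ε₁
  have hlow : lam β / β ≤ sSup Sset + 4 * ε₁ := by
    obtain ⟨μ, hμ, hkey⟩ := key2
    haveI := hμ.1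
    have hmemS : (∫ x, (A y x + V x - V y) ∂μ) ∈ Sset := ⟨μ, hμ, rfl⟩
    have hle := le_csSup hSbdd hmemS
    rw [hSsplit μ hμ] at hle
    have h3 := abs_le.1 (hd1 μ hμ)
    have h4 := abs_le.1 hd2
    have h5 := entropy_le_card (μ := μ) hμ.1
    have hβS : β * (∫ x, A y x ∂μ + ∫ x, V x ∂μ - V y) ≤ β * sSup Sset :=
      mul_le_mul_of_nonneg_left hle hβ.le
    have e1 : β * (∫ x, A y x ∂μ + ∫ x, V x ∂μ - V y)
        = β * (∫ x, A y x ∂μ) + β * (∫ x, V x ∂μ) - β * V y := by ring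
    rw [e1] at hβS
    have hfin : lam β ≤ β * sSup Sset + 4 * (β * ε₁) := by
      linarith [h3.1, h4.2]
    rw [div_le_iff₀ hβ]
    have e2 : (sSup Sset + 4 * ε₁) * β = β * sSup Sset + 4 * (β * ε₁) := by ring
    rw [e2]
    exact hfin
  rw [Real.dist_eq, abs_lt]
  constructor
  · linarith
  · linarith

lemma csSup_le_csSup_of_const (hr : 2 ≤ r) (hIrr : Irred M) {Λ : ℝ}
    (hΛ : Λ ∈ Set.Ioo (0 : ℝ) 1) {A : Shift r M → Shift r M → ℝ} (hA : IsLip2 Λ A)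
    {V Vbar : Shift r M → ℝ} (hVm : Measurable V) (hVbm : Measurable Vbar)
    {CV CVb : ℝ} (hVbd : ∀ x, |V x| ≤ CV) (hVbbd : ∀ x, |Vbar x| ≤ CVb)
    {c cb : ℝ}
    (hc : ∀ y, sSup {t : ℝ | ∃ μ : Measure (Shift r M), InvProb μ ∧
        t = ∫ x, (A y x + V x - V y) ∂μ} = c)
    (hcb : ∀ y, sSup {t : ℝ | ∃ μ : Measure (Shift r M), InvProb μ ∧
        t = ∫ x, (A y x + Vbar x - Vbar y) ∂μ} = cb) :
    cb ≤ c := by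
  obtain ⟨z₀⟩ := shift_nonempty hr hIrr
  obtain ⟨μ₀, hμ₀⟩ := exists_invProb hr hIrr
  obtain ⟨KA, hKA⟩ := hA
  set CA := |A z₀ z₀| + max KA 0 with hCA
  have hAbd : ∀ y x, |A y x| ≤ CA := fun y x => abs_le_of_lipBnd2 hΛ hKA z₀ z₀ y x
  have hAm : ∀ y, Measurable (fun x => A y x) := fun y =>
    measurable_of_lipBnd hΛ (lipBnd_snd hΛ.1.le hKA y)
  apply le_of_forall_pos_le_add
  intro ε hε
  have hε2 : 0 < ε / 2 := by positivity
  have hbdl : BddBelow (Set.range fun x : Shift r M => V x - Vbar x) := by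
    refine ⟨-(CV + CVb), ?_⟩
    rintro _ ⟨x, rfl⟩
    have h1 := abs_le.1 (hVbd x)
    have h2 := abs_le.1 (hVbbd x)
    dsimp only
    linarith [h1.1, h2.2]
  haveI : Nonempty (Shift r M) := ⟨z₀⟩
  set ci := ⨅ x : Shift r M, (V x - Vbar x) with hci
  have hciLe : ∀ x, ci ≤ V x - Vbar x := fun x => ciInf_le hbdl x
  obtain ⟨y₀, hy₀⟩ : ∃ y₀ : Shift r M, V y₀ - Vbar y₀ < ci + ε / 2 := by
    apply exists_lt_of_ciInf_lt
    rw [← hci]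
    linarith
  have hbne : {t : ℝ | ∃ μ : Measure (Shift r M), InvProb μ ∧
      t = ∫ x, (A y₀ x + Vbar x - Vbar y₀) ∂μ}.Nonempty := ⟨_, μ₀, hμ₀, rfl⟩
  obtain ⟨t, ⟨μ, hμ, rfl⟩, hlt⟩ := exists_lt_of_lt_csSup hbne
    (show cb - ε / 2 < sSup {t : ℝ | ∃ μ : Measure (Shift r M), InvProb μ ∧
      t = ∫ x, (A y₀ x + Vbar x - Vbar y₀) ∂μ} by rw [hcb y₀]; linarith)
  haveI := hμ.1
  have intA := integrable_of_bdd hμ.1 (hAm y₀) (hAbd y₀)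
  have intV := integrable_of_bdd hμ.1 hVm hVbd
  have intVb := integrable_of_bdd hμ.1 hVbm hVbbd
  have h1 := integral_add_sub_const hμ intA intV (V y₀)
  have h2 := integral_add_sub_const hμ intA intVb (Vbar y₀)
  have h3 : ci ≤ ∫ x, V x ∂μ - ∫ x, Vbar x ∂μ := by
    have h4 : ∫ _x, ci ∂μ ≤ ∫ x, (V x - Vbar x) ∂μ :=
      integral_mono (integrable_const ci) (intV.sub intVb) hciLe
    rw [integral_const, probReal_univ, smul_eq_mul, one_mul] at h4
    rwa [integral_sub intV intVb] at h4
  have hbddV : BddAbove {t : ℝ | ∃ μ' : Measure (Shift r M), InvProb μ' ∧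
      t = ∫ x, (A y₀ x + V x - V y₀) ∂μ'} := by
    refine ⟨CA + 2 * CV, ?_⟩
    rintro t ⟨μ', hμ', rfl⟩
    refine (abs_le.1 (abs_integral_le hμ' fun x => ?_)).2
    have hx1 := abs_le.1 (hAbd y₀ x)
    have hx2 := abs_le.1 (hVbd x)
    have hx3 := abs_le.1 (hVbd y₀)
    rw [abs_le]
    constructor <;> linarith [hx1.1, hx1.2, hx2.1, hx2.2, hx3.1, hx3.2]
  have hmem : (∫ x, (A y₀ x + V x - V y₀) ∂μ) ∈ {t : ℝ | ∃ μ' : Measure (Shift r M),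
      InvProb μ' ∧ t = ∫ x, (A y₀ x + V x - V y₀) ∂μ'} := ⟨μ, hμ, rfl⟩
  have hle := le_csSup hbddV hmem
  rw [hc y₀] at hle
  rw [h1] at hle
  rw [h2] at hlt
  linarith

end Main

/-- If `β_n → ∞` and `β̄_n → ∞` are sequences with
`φ_{β_n}/β_n → V` and `φ_{β̄_n}/β̄_n → V̄` uniformly (`φ_β` being the forward effective
potential for `βA`), then for every point `y`,
`max_{μ ∈ M_σ} ∫ (A(y,x) + V(x) − V(y)) dμ = max_{μ ∈ M_σ} ∫ (A(y,x) + V̄(x) − V̄(y)) dμ`. -/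
theorem limit_max_independent_of_limit_function
    (r : ℕ) (hr : 2 ≤ r) (M : Fin r → Fin r → Bool)
    (hSym : ∀ i j, M i j = M j i) (hIrr : Irred M)
    (Λ : ℝ) (hΛ : Λ ∈ Set.Ioo (0 : ℝ) 1)
    (A : Shift r M → Shift r M → ℝ) (hA : IsLip2 Λ A)
    (φ : ℝ → Shift r M → ℝ) (lam : ℝ → ℝ)
    (heff : ∀ β > (0 : ℝ), IsLip Λ (φ β) ∧
      ∀ y, Gplus (fun y x => β * A y x) (φ β) y = φ β y + lam β)
    (b bbar : ℕ → ℝ) (hb : ∀ n, 0 < b n) (hbbar : ∀ n, 0 < bbar n)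
    (hbtop : Filter.Tendsto b Filter.atTop Filter.atTop)
    (hbbartop : Filter.Tendsto bbar Filter.atTop Filter.atTop)
    (V Vbar : Shift r M → ℝ)
    (hV : TendstoUniformly (fun n x => φ (b n) x / b n) V Filter.atTop)
    (hVbar : TendstoUniformly (fun n x => φ (bbar n) x / bbar n) Vbar Filter.atTop) :
    ∀ y : Shift r M,
      sSup {t : ℝ | ∃ μ : Measure (Shift r M), InvProb μ ∧
          t = ∫ x, (A y x + V x - V y) ∂μ} =
      sSup {t : ℝ | ∃ μ : Measure (Shift r M), InvProb μ ∧
          t = ∫ x, (A y x + Vbar x - Vbar y) ∂μ} := by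
  intro y
  obtain ⟨z₀⟩ := shift_nonempty hr hIrr
  have hVm : Measurable V := unif_lim_measurable hΛ (fun β hβ => (heff β hβ).1) hb hV
  have hVbm : Measurable Vbar :=
    unif_lim_measurable hΛ (fun β hβ => (heff β hβ).1) hbbar hVbar
  obtain ⟨CV, hCV⟩ := unif_lim_bounded hΛ z₀ (fun β hβ => (heff β hβ).1) hb hV
  obtain ⟨CVb, hCVb⟩ := unif_lim_bounded hΛ z₀ (fun β hβ => (heff β hβ).1) hbbar hVbar
  have hcV : ∀ y' : Shift r M,
      sSup {t : ℝ | ∃ μ : Measure (Shift r M), InvProb μ ∧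
        t = ∫ x, (A y' x + V x - V y') ∂μ}
      = sSup {t : ℝ | ∃ μ : Measure (Shift r M), InvProb μ ∧
        t = ∫ x, (A y x + V x - V y) ∂μ} := fun y' =>
    tendsto_nhds_unique (tendsto_lam_div hr hIrr hΛ hA heff hb hbtop hV y')
      (tendsto_lam_div hr hIrr hΛ hA heff hb hbtop hV y)
  have hcVb : ∀ y' : Shift r M,
      sSup {t : ℝ | ∃ μ : Measure (Shift r M), InvProb μ ∧
        t = ∫ x, (A y' x + Vbar x - Vbar y') ∂μ}
      = sSup {t : ℝ | ∃ μ : Measure (Shift r M), InvProb μ ∧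
        t = ∫ x, (A y x + Vbar x - Vbar y) ∂μ} := fun y' =>
    tendsto_nhds_unique (tendsto_lam_div hr hIrr hΛ hA heff hbbar hbbartop hVbar y')
      (tendsto_lam_div hr hIrr hΛ hA heff hbbar hbbartop hVbar y)
  have h1 : sSup {t : ℝ | ∃ μ : Measure (Shift r M), InvProb μ ∧
        t = ∫ x, (A y x + Vbar x - Vbar y) ∂μ}
      ≤ sSup {t : ℝ | ∃ μ : Measure (Shift r M), InvProb μ ∧
        t = ∫ x, (A y x + V x - V y) ∂μ} :=
    csSup_le_csSup_of_const hr hIrr hΛ hA hVm hVbm hCV hCVb hcV hcVb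
  have h2 : sSup {t : ℝ | ∃ μ : Measure (Shift r M), InvProb μ ∧
        t = ∫ x, (A y x + V x - V y) ∂μ}
      ≤ sSup {t : ℝ | ∃ μ : Measure (Shift r M), InvProb μ ∧
        t = ∫ x, (A y x + Vbar x - Vbar y) ∂μ} :=
    csSup_le_csSup_of_const hr hIrr hΛ hA hVbm hVm hCVb hCV hcVb hcV
  exact le_antisymm h2 h1
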